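/- Let c, τ > 0 and define E : ℂ⁵ → ℝ by E(ψ) = (5c/(14π))·((Σ_{m} |ψ_m|² - τ)² - τ² + (1/2)|Σ_m ψ_m²|²). Then min E = -(5c/(14π))τ², and the set of minimizers is exactly {ψ ∈ ℂ⁵ : Σ_m |ψ_m|² = τ and Σ_m ψ_m² = 0}. -/

import Mathlib

theorem stmt8 (c τ : ℝ) (hc : 0 < c) (hτ : 0 < τ)
    (E : (Fin 5 → ℂ) → ℝ)
    (hE : ∀ ψ, E ψ = (5*c/(14*Real.pi)) *
      ((∑ m, ‖ψ m‖^2 - τ)^2 - τ^2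
        + (1/2) * ‖∑ m, (ψ m)^2‖^2)) :
    IsLeast (Set.range E) (-(5*c/(14*Real.pi)) * τ^2) ∧
    ∀ ψ, E ψ = -(5*c/(14*Real.pi)) * τ^2 ↔
      ((∑ m, ‖ψ m‖^2) = τ ∧ (∑ m, (ψ m)^2) = 0) := by
  have hπ : 0 < Real.pi := Real.pi_pos
  have hK : 0 < 5*c/(14*Real.pi) := by positivity
  constructor
  · constructor
    · -- membership
      set a : ℝ := Real.sqrt (τ/2) with ha
      have ha2 : a^2 = τ/2 := Real.sq_sqrt (by linarith)
      refine ⟨![(a:ℂ), (a:ℂ) * Complex.I, 0, 0, 0], ?_⟩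
      rw [hE]
      have h1 : (∑ m, ‖(![(a:ℂ), (a:ℂ) * Complex.I, 0, 0, 0] : Fin 5 → ℂ) m‖^2) = τ := by
        simp [Fin.sum_univ_five, map_mul, Complex.norm_real,
          abs_of_nonneg (Real.sqrt_nonneg (τ/2)), ← ha]
        nlinarith [ha2]
      have h2 : (∑ m, ((![(a:ℂ), (a:ℂ) * Complex.I, 0, 0, 0] : Fin 5 → ℂ) m)^2) = 0 := by
        simp [Fin.sum_univ_five, mul_pow, Complex.I_sq]
      rw [h1, h2]
      simp
    · rintro x ⟨ψ, rfl⟩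
      rw [hE]
      nlinarith [sq_nonneg (∑ m, ‖ψ m‖^2 - τ),
        sq_nonneg (‖∑ m, (ψ m)^2‖), hK]
  · intro ψ
    rw [hE]
    constructor
    · intro h
      have h1 : (∑ m, ‖ψ m‖^2 - τ)^2 + (1/2) * ‖∑ m, (ψ m)^2‖^2 = 0 := by
        have := mul_left_cancel₀ (ne_of_gt hK) (by linarith [h] : (5*c/(14*Real.pi)) * ((∑ m, ‖ψ m‖^2 - τ)^2 - τ^2 + (1/2) * ‖∑ m, (ψ m)^2‖^2) = (5*c/(14*Real.pi)) * (-τ^2))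
        linarith
      have h2 : ‖∑ m, (ψ m)^2‖ = 0 := by
        nlinarith [sq_nonneg (∑ m, ‖ψ m‖^2 - τ), sq_nonneg (‖∑ m, (ψ m)^2‖), norm_nonneg (∑ m, (ψ m)^2)]
      have h3 : (∑ m, ‖ψ m‖^2 - τ) = 0 := by
        nlinarith [sq_nonneg (∑ m, ‖ψ m‖^2 - τ), sq_nonneg (‖∑ m, (ψ m)^2‖)]
      exact ⟨by linarith, by simpa using h2⟩
    · rintro ⟨h1, h2⟩
      rw [h1, h2]
      simp
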